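/- If G is a finite group with a normal p-complement (G = N ⋊ P with N of order coprime to p and P ∈ Syl_p(G)), then N_G(Q)/C_G(Q) is a p-group for every p-subgroup Q of G. -/

import Mathlib

/-- If a finite group `G` has a normal `p`-complement `N` (so `N ⊴ G`, `p ∤ |N|` and
`G/N` is a `p`-group), then `N_G(Q)/C_G(Q)` has `p`-power order for every
`p`-subgroup `Q ≤ G`. -/
theorem normal_p_complement_automizers {G : Type*} [Group G] [Fintype G]
    {p : ℕ} [Fact p.Prime] (N : Subgroup G) [N.Normal] (hN : ¬ p ∣ Nat.card N)
    (hquot : IsPGroup p (G ⧸ N)) :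
    ∀ Q : Subgroup G, IsPGroup p Q →
      ∃ k : ℕ, (Subgroup.centralizer (Q : Set G)).relIndex (Subgroup.normalizer (Q : Set G)) = p ^ k := by
  intro Q hQ
  have hp := Fact.out (p := p.Prime)
  -- Q ∩ N = ⊥
  have hQN : Q ⊓ N = ⊥ := by
    rw [eq_bot_iff]
    intro x hx
    obtain ⟨hxQ, hxN⟩ := Subgroup.mem_inf.mp hx
    obtain ⟨n, hn⟩ := hQ ⟨x, hxQ⟩
    have hn' : x ^ p ^ n = 1 := by
      have := congrArg (Subgroup.subtype Q) hn
      simpa using this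
    -- order of x divides p^n and card N
    have hord : orderOf x ∣ p ^ n := orderOf_dvd_of_pow_eq_one hn'
    have hordN : orderOf x ∣ Nat.card N := by
      have : orderOf (⟨x, hxN⟩ : N) ∣ Nat.card N := orderOf_dvd_natCard _
      rwa [Subgroup.orderOf_mk] at this
    obtain ⟨i, hi, hio⟩ := (Nat.dvd_prime_pow hp).mp hord
    rcases Nat.eq_zero_or_pos i with h0 | h0
    · have : orderOf x = 1 := by simpa [h0] using hio
      have := orderOf_eq_one_iff.mp this
      simp [this]
    · exfalso
      apply hN
      calc p ∣ p ^ i := dvd_pow_self p h0.ne'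
        _ = orderOf x := hio.symm
        _ ∣ Nat.card N := hordN
  -- N ⊓ normalizer Q ≤ centralizer Q
  have hle : N ⊓ Subgroup.normalizer (Q : Set G) ≤ Subgroup.centralizer (Q : Set G) := by
    intro g hg
    obtain ⟨hgN, hgH⟩ := Subgroup.mem_inf.mp hg
    rw [Subgroup.mem_centralizer_iff]
    intro q hq
    -- commutator c = q * g * q⁻¹ * g⁻¹ ∈ Q ⊓ N
    have hc1 : q * g * q⁻¹ * g⁻¹ ∈ N := by
      have : q * g * q⁻¹ ∈ N := (Subgroup.Normal.mem_comm_iff ‹N.Normal›).mp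
        (by simpa [mul_assoc] using hgN)
      exact N.mul_mem this (N.inv_mem hgN)
    have hc2 : q * g * q⁻¹ * g⁻¹ ∈ Q := by
      have h1 : g * q⁻¹ * g⁻¹ ∈ Q := by
        rw [Subgroup.mem_normalizer_iff] at hgH
        exact (hgH q⁻¹).mp (Q.inv_mem hq)
      have := Q.mul_mem hq h1
      simpa [mul_assoc] using this
    have : q * g * q⁻¹ * g⁻¹ = 1 := by
      have : q * g * q⁻¹ * g⁻¹ ∈ Q ⊓ N := ⟨hc2, hc1⟩
      simpa [hQN] using this
    have := mul_eq_one_iff_eq_inv.mp this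
    -- from q * g * q⁻¹ = g derive g * q = q * g
    have h2 : q * g = g * q := by
      have h3 : q * g * q⁻¹ = g := by
        rw [inv_inv] at this
        exact this
      calc q * g = (q * g * q⁻¹) * q := by group
        _ = g * q := by rw [h3]
    exact h2
  -- index divisibility
  have hdvd : (Subgroup.centralizer (Q : Set G)).relIndex (Subgroup.normalizer (Q : Set G)) ∣ N.index := by
    calc (Subgroup.centralizer (Q : Set G)).relIndex (Subgroup.normalizer (Q : Set G))
        ∣ (N ⊓ Subgroup.normalizer (Q : Set G)).relIndex (Subgroup.normalizer (Q : Set G)) :=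
          Subgroup.relIndex_dvd_of_le_left _ (le_trans hle (le_refl _) |>.trans (le_refl _) |> fun h => h)
      _ = N.relIndex (Subgroup.normalizer (Q : Set G)) := Subgroup.inf_relIndex_right N (Subgroup.normalizer (Q : Set G))
      _ ∣ N.index := Subgroup.relIndex_dvd_index_of_normal N (Subgroup.normalizer (Q : Set G))
  obtain ⟨k, hk⟩ := IsPGroup.iff_card.mp hquot
  rw [Subgroup.index_eq_card, hk] at hdvd
  obtain ⟨i, _, hi⟩ := (Nat.dvd_prime_pow hp).mp hdvd
  exact ⟨i, hi⟩
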